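/- There exists a constant M > 1 such that for every integer d ≥ 1, all reals r₁, r₂ with 0 ≤ r₁ ≤ r₂, and every finite graph G ∈ 𝒜_d(r₁,r₂) having at least one vertex, the chromatic number satisfies χ(G) ≤ M^d · ω(G). In particular this holds for unit disc graphs (the case r₁ = 0, r₂ = 1) and for every family 𝒜_d(1,x) with x ≥ 1. -/

import Mathlib

/-- `f` is an `(R₁,R₂)`-annulus embedding of the simple graph `G` in `ℝ^d`. -/
def IsAnnulusEmbedding {d : ℕ} {V : Type*} (G : SimpleGraph V) (R₁ R₂ : ℝ)
    (f : V → EuclideanSpace ℝ (Fin d)) : Prop :=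
  Function.Injective f ∧
    ∀ u v : V, u ≠ v → (G.Adj u v ↔ dist (f u) (f v) ∈ Set.Icc R₁ R₂)

/-- `G` belongs to the family `𝒜_d(R₁,R₂)` of `d`-dimensional annulus graphs. -/
def MemAnnulusFamily (d : ℕ) (R₁ R₂ : ℝ) {V : Type*} (G : SimpleGraph V) : Prop :=
  ∃ f : V → EuclideanSpace ℝ (Fin d), IsAnnulusEmbedding G R₁ R₂ f


open Metric MeasureTheory Finset
open scoped ENNReal

lemma exists_net {ι : Type*} (A : Finset ι) {d : ℕ} (g : ι → EuclideanSpace ℝ (Fin d)) (r : ℝ) :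
    ∃ S, S ⊆ A ∧ ((S : Set ι).Pairwise fun a b => r ≤ dist (g a) (g b)) ∧
      ∀ a ∈ A, ∃ b ∈ S, a = b ∨ dist (g a) (g b) < r := by
  classical
  set fam := A.powerset.filter
      (fun T : Finset ι => (T : Set ι).Pairwise fun a b => r ≤ dist (g a) (g b)) with hfam
  have h0 : (∅ : Finset ι) ∈ fam := by simp [hfam]
  obtain ⟨S, hSmem, hSmax⟩ := fam.exists_maximal ⟨∅, h0⟩
  rw [hfam, Finset.mem_filter, Finset.mem_powerset] at hSmem
  refine ⟨S, hSmem.1, hSmem.2, ?_⟩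
  intro a ha
  by_cases haS : a ∈ S
  · exact ⟨a, haS, Or.inl rfl⟩
  by_contra hcon
  push_neg at hcon
  have hsep : ∀ b ∈ S, r ≤ dist (g a) (g b) := by
    intro b hb
    exact (hcon b hb).2
  have hins : insert a S ∈ fam := by
    rw [hfam, Finset.mem_filter, Finset.mem_powerset]
    refine ⟨Finset.insert_subset ha hSmem.1, ?_⟩
    rw [Finset.coe_insert]
    refine (haveI : Std.Symm fun a b : ι => r ≤ dist (g a) (g b) := ⟨?_⟩
      Set.pairwise_insert_of_symmetric_of_notMem (by simpa using haS)).mpr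
      ⟨hSmem.2, fun b hb => hsep b (by simpa using hb)⟩
    intro x y hxy; rwa [dist_comm]
  exact haS (hSmax hins (Finset.subset_insert a S) (Finset.mem_insert_self a S))

/-- Volume packing bound: an `r`-separated finite set within distance `R` of a point `c`
in `ℝ^d` (`d ≥ 1`) has at most `K^d` elements, provided `2R + r ≤ K·r`. -/
lemma packing_lemma {d : ℕ} (hd : 0 < d) {r R : ℝ} (hr : 0 < r) {K : ℕ}
    (hK : 2 * R + r ≤ K * r) (c : EuclideanSpace ℝ (Fin d))
    (s : Finset (EuclideanSpace ℝ (Fin d)))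
    (hsep : (s : Set (EuclideanSpace ℝ (Fin d))).Pairwise fun x y => r ≤ dist x y)
    (hin : ∀ x ∈ s, dist x c ≤ R) : s.card ≤ K ^ d := by
  classical
  haveI : Nonempty (Fin d) := ⟨⟨0, hd⟩⟩
  rcases s.eq_empty_or_nonempty with rfl | ⟨x₀, hx₀⟩
  · simp
  have hR : 0 ≤ R := le_trans dist_nonneg (hin x₀ hx₀)
  have hdisj : (s : Set (EuclideanSpace ℝ (Fin d))).PairwiseDisjoint
      (fun x => ball x (r / 2)) := by
    intro x hx y hy hxy
    exact ball_disjoint_ball (by linarith [hsep hx hy hxy])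
  have hsub : (⋃ x ∈ s, ball x (r / 2)) ⊆ ball c (R + r / 2) := by
    intro z hz
    simp only [Set.mem_iUnion] at hz
    obtain ⟨x, hx, hz⟩ := hz
    have h1 : dist z x < r / 2 := mem_ball.mp hz
    have h2 := hin x hx
    have := dist_triangle z x c
    exact mem_ball.mpr (by linarith)
  have hvol : ∑ x ∈ s, volume (ball x (r / 2)) ≤ volume (ball c (R + r / 2)) := by
    rw [← measure_biUnion_finset hdisj (fun x _ => measurableSet_ball)]
    exact measure_mono hsub
  set C : ℝ≥0∞ := ENNReal.ofReal (Real.sqrt Real.pi ^ d / Real.Gamma (d / 2 + 1)) with hC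
  have hball : ∀ (x : EuclideanSpace ℝ (Fin d)) (ρ : ℝ),
      volume (ball x ρ) = (ENNReal.ofReal ρ) ^ d * C := by
    intro x ρ
    rw [EuclideanSpace.volume_ball (Fin d) x ρ]
    simp [hC, Fintype.card_fin]
  have hCpos : 0 < C := by
    have := measure_ball_pos volume c one_pos
    rw [hball c 1] at this
    simpa using this
  rw [Finset.sum_congr rfl (fun x _ => hball x (r / 2)), Finset.sum_const, hball,
    nsmul_eq_mul, ← mul_assoc] at hvol
  have hC_ne_top : C ≠ ⊤ := by rw [hC]; exact ENNReal.ofReal_ne_top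
  have hvol2 : (s.card : ℝ≥0∞) * (ENNReal.ofReal (r / 2)) ^ d ≤
      (ENNReal.ofReal (R + r / 2)) ^ d :=
    (ENNReal.mul_le_mul_iff_left hCpos.ne' hC_ne_top).mp hvol
  have hr2 : (0:ℝ) ≤ r / 2 := by linarith
  have hreal : (s.card : ℝ) * (r / 2) ^ d ≤ (R + r / 2) ^ d := by
    rw [show ((s.card : ℝ≥0∞)) = ENNReal.ofReal (s.card : ℝ) by
          rw [ENNReal.ofReal_natCast],
        ← ENNReal.ofReal_pow hr2, ← ENNReal.ofReal_mul (by positivity),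
        ← ENNReal.ofReal_pow (by linarith)] at hvol2
    exact (ENNReal.ofReal_le_ofReal_iff (by positivity)).mp hvol2
  have hKr : R + r / 2 ≤ (K : ℝ) * (r / 2) := by linarith
  have h2 : (R + r / 2) ^ d ≤ ((K : ℝ)) ^ d * (r / 2) ^ d := by
    rw [← mul_pow]
    exact pow_le_pow_left₀ (by linarith) hKr d
  have h3 : (s.card : ℝ) ≤ (K : ℝ) ^ d :=
    le_of_mul_le_mul_right (hreal.trans h2) (by positivity)
  exact_mod_cast h3

/-- Greedy colouring: if every vertex of `s` has fewer than `k` neighbours in `s`,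
then there is a function `V → Fin k` proper on `s`. -/
lemma greedy_coloring {V : Type*} [DecidableEq V] (G : SimpleGraph V) [DecidableRel G.Adj]
    (k : ℕ) (hk : 0 < k) :
    ∀ s : Finset V, (∀ v ∈ s, (s.filter (fun u => G.Adj v u)).card < k) →
      ∃ c : V → Fin k, ∀ u ∈ s, ∀ v ∈ s, G.Adj u v → c u ≠ c v := by
  intro s
  induction s using Finset.strongInduction with
  | _ s ih =>
    rcases s.eq_empty_or_nonempty with rfl | ⟨v, hv⟩
    · exact fun _ => ⟨fun _ => ⟨0, hk⟩, by simp⟩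
    intro hdeg
    obtain ⟨c, hc⟩ := ih (s.erase v) (Finset.erase_ssubset hv) (fun u hu =>
      lt_of_le_of_lt (Finset.card_le_card
        (Finset.filter_subset_filter _ (Finset.erase_subset _ _)))
        (hdeg u (Finset.mem_of_mem_erase hu)))
    set N := (s.erase v).filter (fun u => G.Adj v u) with hN
    have hNcard : (N.image c).card < k := by
      calc (N.image c).card ≤ N.card := Finset.card_image_le
        _ ≤ (s.filter (fun u => G.Adj v u)).card :=
          Finset.card_le_card (Finset.filter_subset_filter _ (Finset.erase_subset _ _))
        _ < k := hdeg v hv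
    have hcompl : ((N.image c)ᶜ : Finset (Fin k)).Nonempty := by
      rw [← Finset.card_pos, Finset.card_compl]
      have : (N.image c).card < Fintype.card (Fin k) := by rwa [Fintype.card_fin]
      omega
    obtain ⟨a, ha⟩ := hcompl
    have ha' : a ∉ N.image c := Finset.mem_compl.mp ha
    refine ⟨Function.update c v a, ?_⟩
    intro x hx y hy hxy
    have hne : x ≠ y := G.ne_of_adj hxy
    by_cases hxv : x = v
    · have hyv : y ≠ v := fun h => hne (hxv.trans h.symm)
      rw [hxv, Function.update_self, Function.update_of_ne hyv]
      intro h
      exact ha' (Finset.mem_image.mpr ⟨y, Finset.mem_filter.mpr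
        ⟨Finset.mem_erase.mpr ⟨hyv, hy⟩, hxv ▸ hxy⟩, h.symm⟩)
    · by_cases hyv : y = v
      · rw [hyv, Function.update_self, Function.update_of_ne hxv]
        intro h
        exact ha' (Finset.mem_image.mpr ⟨x, Finset.mem_filter.mpr
          ⟨Finset.mem_erase.mpr ⟨hxv, hx⟩, hyv ▸ hxy.symm⟩, h⟩)
      · rw [Function.update_of_ne hxv, Function.update_of_ne hyv]
        exact hc x (Finset.mem_erase.mpr ⟨hxv, hx⟩) y (Finset.mem_erase.mpr ⟨hyv, hy⟩) hxy

/-- There is a constant `M > 1` such that every finite `d`-dimensional annulus graph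
`G` (with at least one vertex, radii `0 ≤ r₁ ≤ r₂`) satisfies `χ(G) ≤ M^d · ω(G)`:
that is, `G` admits a proper colouring with some number `k ≤ M^d · ω(G)` of colours. -/
theorem annulus_chi_le_omega :
    ∃ M : ℝ, 1 < M ∧ ∀ (d : ℕ), 1 ≤ d → ∀ r₁ r₂ : ℝ, 0 ≤ r₁ → r₁ ≤ r₂ →
      ∀ (n : ℕ) (G : SimpleGraph (Fin n)), 1 ≤ n →
        MemAnnulusFamily d r₁ r₂ G →
          ∃ k : ℕ, G.Colorable k ∧ (k : ℝ) ≤ M ^ d * (G.cliqueNum : ℝ) := by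
  classical
  refine ⟨45, by norm_num, ?_⟩
  intro d hd r₁ r₂ hr₁ hr₁₂ n G hn hG
  obtain ⟨f, hinj, hadj⟩ := hG
  have hdpos : 0 < d := hd
  have hr₂ : 0 ≤ r₂ := hr₁.trans hr₁₂
  set ω := G.cliqueNum with hω
  -- ## Centers: a maximal (r₂/2)-separated set of vertices
  obtain ⟨S, -, hSsep, hScov⟩ := exists_net (Finset.univ : Finset (Fin n)) f (r₂ / 2)
  have hcov : ∀ v : Fin n, ∃ b, b ∈ S ∧ (v = b ∨ dist (f v) (f b) < r₂ / 2) := by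
    intro v; obtain ⟨b, hb, h⟩ := hScov v (Finset.mem_univ v); exact ⟨b, hb, h⟩
  choose ctr hctrS hctrd using hcov
  have hctr_le : ∀ v, dist (f v) (f (ctr v)) ≤ r₂ / 2 := by
    intro v
    rcases hctrd v with h | h
    · rw [← h, dist_self]; linarith
    · linarith
  -- ## The conflict graph on centers
  let CG : SimpleGraph (Fin n) :=
    { Adj := fun a b => a ≠ b ∧ a ∈ S ∧ b ∈ S ∧ dist (f a) (f b) ≤ 2 * r₂
      symm := ⟨by rintro a b ⟨h1, h2, h3, h4⟩; exact ⟨h1.symm, h3, h2, by rwa [dist_comm]⟩⟩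
      loopless := ⟨fun a h => h.1 rfl⟩ }
  haveI : DecidableRel CG.Adj := Classical.decRel _
  have hCGadj : ∀ a b : Fin n, CG.Adj a b ↔
      (a ≠ b ∧ a ∈ S ∧ b ∈ S ∧ dist (f a) (f b) ≤ 2 * r₂) := fun a b => Iff.rfl
  have hdeg : ∀ v ∈ (Finset.univ : Finset (Fin n)),
      ((Finset.univ.filter (fun u => CG.Adj v u)).card < 9 ^ d) := by
    intro v _
    have h9 : 0 < 9 ^ d := by positivity
    by_cases hvS : v ∈ S
    · by_cases hr2pos : 0 < r₂
      · -- packing argument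
        set T : Finset (Fin n) := insert v (Finset.univ.filter (fun u => CG.Adj v u)) with hT
        have hTS : ∀ a ∈ T, a ∈ S := by
          intro a ha
          rcases Finset.mem_insert.mp ha with rfl | ha
          · exact hvS
          · exact ((Finset.mem_filter.mp ha).2).2.2.1
        have hTball : ∀ p ∈ T.image f, dist p (f v) ≤ 2 * r₂ := by
          intro p hp
          obtain ⟨a, ha, rfl⟩ := Finset.mem_image.mp hp
          rcases Finset.mem_insert.mp ha with rfl | ha
          · rw [dist_self]; linarith
          · rw [dist_comm]; exact ((Finset.mem_filter.mp ha).2).2.2.2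
        have hTsep : ((T.image f : Finset (EuclideanSpace ℝ (Fin d))) :
            Set (EuclideanSpace ℝ (Fin d))).Pairwise fun x y => r₂ / 2 ≤ dist x y := by
          intro p hp q hq hpq
          obtain ⟨a, ha, rfl⟩ := Finset.mem_image.mp (Finset.mem_coe.mp hp)
          obtain ⟨b, hb, rfl⟩ := Finset.mem_image.mp (Finset.mem_coe.mp hq)
          have hab : a ≠ b := fun h => hpq (by rw [h])
          exact hSsep (Finset.mem_coe.mpr (hTS a ha)) (Finset.mem_coe.mpr (hTS b hb)) hab
        have hpack := packing_lemma hdpos (by linarith : (0:ℝ) < r₂ / 2)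
          (K := 9) (by push_cast; linarith) (f v) (T.image f) hTsep hTball
        have hTcard : T.card ≤ 9 ^ d := by
          rwa [Finset.card_image_of_injective T hinj] at hpack
        have hvnot : v ∉ Finset.univ.filter (fun u => CG.Adj v u) := by
          simp only [Finset.mem_filter]
          rintro ⟨-, h⟩
          exact h.1 rfl
        have := Finset.card_insert_of_notMem hvnot
        rw [← hT] at this
        omega
      · -- r₂ = 0 : no conflicts at all
        have : Finset.univ.filter (fun u => CG.Adj v u) = ∅ := by
          apply Finset.filter_false_of_mem
          rintro u - ⟨hne, -, -, hle⟩
          have : (0:ℝ) < dist (f v) (f u) := dist_pos.mpr (fun h => hne (hinj h))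
          have hr20 : r₂ = 0 := le_antisymm (not_lt.mp hr2pos) hr₂
          rw [hr20] at hle; linarith
        rw [this]; simp only [Finset.card_empty]; exact h9
    · have : Finset.univ.filter (fun u => CG.Adj v u) = ∅ := by
        apply Finset.filter_false_of_mem
        rintro u - ⟨-, hvS', -, -⟩
        exact hvS hvS'
      rw [this]; simp only [Finset.card_empty]; exact h9
  obtain ⟨cc, hcc⟩ := greedy_coloring CG (9 ^ d) (by positivity) Finset.univ hdeg
  -- ## Cells and pieces
  set cell : Fin n → Finset (Fin n) :=
    fun c => Finset.univ.filter (fun v => ctr v = c) with hcell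
  have hUex : ∀ c : Fin n, ∃ Uc, Uc ⊆ cell c ∧
      ((Uc : Set (Fin n)).Pairwise fun a b => r₁ / 2 ≤ dist (f a) (f b)) ∧
      ∀ a ∈ cell c, ∃ b ∈ Uc, a = b ∨ dist (f a) (f b) < r₁ / 2 :=
    fun c => exists_net (cell c) f (r₁ / 2)
  choose U hUsub hUsep hUcov using hUex
  have hmemcell : ∀ v : Fin n, v ∈ cell (ctr v) := by
    intro v; simp [hcell]
  have hpc' : ∀ v : Fin n, ∃ b, b ∈ U (ctr v) ∧ (v = b ∨ dist (f v) (f b) < r₁ / 2) := by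
    intro v
    obtain ⟨b, hb, h⟩ := hUcov (ctr v) v (hmemcell v)
    exact ⟨b, hb, h⟩
  choose pc hpcU hpcd using hpc'
  have hcell_rad : ∀ c, ∀ v ∈ cell c, dist (f v) (f c) ≤ r₂ / 2 := by
    intro c v hv
    have h : ctr v = c := by simpa [hcell] using hv
    rw [← h]; exact hctr_le v
  -- ## Size of each U c
  have hUcard : ∀ c : Fin n, (U c).card ≤ ω * 5 ^ d := by
    intro c
    obtain ⟨W, hWU, hWsep, hWcov⟩ := exists_net (U c) f r₁
    have hWclique : G.IsClique (W : Set (Fin n)) := by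
      intro a ha b hb hab
      refine (hadj a b hab).mpr ⟨hWsep ha hb hab, ?_⟩
      have h1 := hcell_rad c a (hUsub c (hWU (Finset.mem_coe.mp ha)))
      have h2 := hcell_rad c b (hUsub c (hWU (Finset.mem_coe.mp hb)))
      have := dist_triangle (f a) (f c) (f b)
      rw [dist_comm (f c) (f b)] at this
      linarith
    have hWcard : W.card ≤ ω :=
      SimpleGraph.IsClique.card_le_cliqueNum (tc := hWclique)
    have hsubU : U c ⊆ W.biUnion (fun w => (U c).filter (fun x => dist (f x) (f w) ≤ r₁)) := by
      intro x hx
      obtain ⟨w, hw, hxw⟩ := hWcov x hx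
      refine Finset.mem_biUnion.mpr ⟨w, hw, Finset.mem_filter.mpr ⟨hx, ?_⟩⟩
      rcases hxw with rfl | h
      · rw [dist_self]; exact hr₁
      · linarith
    have hper : ∀ w ∈ W, ((U c).filter (fun x => dist (f x) (f w) ≤ r₁)).card ≤ 5 ^ d := by
      intro w hw
      by_cases hr1pos : 0 < r₁
      · set F := (U c).filter (fun x => dist (f x) (f w) ≤ r₁) with hF
        have hFsep : ((F.image f : Finset (EuclideanSpace ℝ (Fin d))) :
            Set (EuclideanSpace ℝ (Fin d))).Pairwise fun x y => r₁ / 2 ≤ dist x y := by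
          intro p hp q hq hpq
          obtain ⟨a, ha, rfl⟩ := Finset.mem_image.mp (Finset.mem_coe.mp hp)
          obtain ⟨b, hb, rfl⟩ := Finset.mem_image.mp (Finset.mem_coe.mp hq)
          have hab : a ≠ b := fun h => hpq (by rw [h])
          exact hUsep c (Finset.mem_coe.mpr (Finset.filter_subset _ _ ha))
            (Finset.mem_coe.mpr (Finset.filter_subset _ _ hb)) hab
        have hFball : ∀ p ∈ F.image f, dist p (f w) ≤ r₁ := by
          intro p hp
          obtain ⟨a, ha, rfl⟩ := Finset.mem_image.mp hp
          exact (Finset.mem_filter.mp ha).2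
        have hpack := packing_lemma hdpos (by linarith : (0:ℝ) < r₁ / 2)
          (K := 5) (by push_cast; linarith) (f w) (F.image f) hFsep hFball
        rwa [Finset.card_image_of_injective F hinj] at hpack
      · have hr10 : r₁ = 0 := le_antisymm (not_lt.mp hr1pos) hr₁
        have : (U c).filter (fun x => dist (f x) (f w) ≤ r₁) ⊆ {w} := by
          intro x hx
          have hle := (Finset.mem_filter.mp hx).2
          rw [hr10] at hle
          have : dist (f x) (f w) = 0 := le_antisymm hle dist_nonneg
          simp [hinj (dist_eq_zero.mp this)]
        calc ((U c).filter (fun x => dist (f x) (f w) ≤ r₁)).card ≤ 1 :=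
              le_trans (Finset.card_le_card this) (by simp)
          _ ≤ 5 ^ d := Nat.one_le_iff_ne_zero.mpr (by positivity)
    calc (U c).card ≤ (W.biUnion fun w => (U c).filter (fun x => dist (f x) (f w) ≤ r₁)).card :=
          Finset.card_le_card hsubU
      _ ≤ ∑ w ∈ W, ((U c).filter (fun x => dist (f x) (f w) ≤ r₁)).card :=
          Finset.card_biUnion_le
      _ ≤ W.card * 5 ^ d := by
          rw [← smul_eq_mul]
          exact Finset.sum_le_card_nsmul _ _ _ hper
      _ ≤ ω * 5 ^ d := Nat.mul_le_mul_right _ hWcard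
  -- ## The final colouring
  set B := ω * 5 ^ d with hB
  have hidxlt : ∀ v : Fin n, List.idxOf (pc v) ((U (ctr v)).sort (· ≤ ·)) < B := by
    intro v
    have hmem : pc v ∈ (U (ctr v)).sort (· ≤ ·) := (Finset.mem_sort _).mpr (hpcU v)
    have := List.idxOf_lt_length_iff.mpr hmem
    rw [Finset.length_sort] at this
    exact lt_of_lt_of_le this (hUcard (ctr v))
  set col : Fin n → Fin (9 ^ d) × Fin B :=
    fun v => (cc (ctr v), ⟨List.idxOf (pc v) ((U (ctr v)).sort (· ≤ ·)), hidxlt v⟩) with hcol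
  have hproper : ∀ {a b : Fin n}, G.Adj a b → col a ≠ col b := by
    intro a b hab hcoleq
    have hne : a ≠ b := G.ne_of_adj hab
    have h1 : cc (ctr a) = cc (ctr b) := congrArg Prod.fst hcoleq
    have h2 : List.idxOf (pc a) ((U (ctr a)).sort (· ≤ ·)) =
        List.idxOf (pc b) ((U (ctr b)).sort (· ≤ ·)) := by
      have := congrArg (fun p => (p.2 : ℕ)) hcoleq
      simpa [hcol] using this
    have hdists := (hadj a b hne).mp hab
    rw [Set.mem_Icc] at hdists
    by_cases hctreq : ctr a = ctr b
    · -- same cell: the two vertices lie in the same piece, hence are too close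
      rw [hctreq] at h2
      have hmema : pc a ∈ (U (ctr b)).sort (· ≤ ·) :=
        (Finset.mem_sort _).mpr (hctreq ▸ hpcU a)
      have hmemb : pc b ∈ (U (ctr b)).sort (· ≤ ·) := (Finset.mem_sort _).mpr (hpcU b)
      have hpceq : pc a = pc b := (List.idxOf_inj hmema).mp h2
      have hda := hpcd a
      have hdb := hpcd b
      rw [hpceq] at hda
      have hlt : dist (f a) (f b) < r₁ := by
        rcases hda with ha' | ha' <;> rcases hdb with hb' | hb'
        · exact absurd (ha'.trans hb'.symm) hne
        · rw [ha', dist_comm]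
          have : (0:ℝ) < r₁ / 2 := lt_of_le_of_lt dist_nonneg hb'
          linarith
        · rw [hb']
          have : (0:ℝ) < r₁ / 2 := lt_of_le_of_lt dist_nonneg ha'
          linarith
        · have := dist_triangle (f a) (f (pc b)) (f b)
          rw [dist_comm (f (pc b)) (f b)] at this
          linarith
      linarith [hdists.1]
    · -- different cells with the same cell colour: the two vertices are too far
      have hCG : ¬ CG.Adj (ctr a) (ctr b) := fun h => hcc _ (Finset.mem_univ _) _
        (Finset.mem_univ _) h h1
      have hfar : 2 * r₂ < dist (f (ctr a)) (f (ctr b)) := by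
        by_contra hle
        exact hCG ⟨hctreq, hctrS a, hctrS b, not_lt.mp hle⟩
      have t1 := dist_triangle (f (ctr a)) (f a) (f (ctr b))
      have t2 := dist_triangle (f a) (f b) (f (ctr b))
      have e1 : dist (f (ctr a)) (f a) = dist (f a) (f (ctr a)) := dist_comm _ _
      have e2 : dist (f b) (f (ctr b)) = dist (f b) (f (ctr b)) := rfl
      have h3 := hctr_le a
      have h4 := hctr_le b
      have h5 : dist (f b) (f (ctr b)) ≤ r₂ / 2 := h4
      have := hdists.2
      nlinarith [dist_triangle (f (ctr a)) (f a) (f (ctr b)),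
        dist_triangle (f a) (f b) (f (ctr b)), dist_comm (f (ctr a)) (f a),
        dist_comm (f b) (f (ctr b))]
  let Col : G.Coloring (Fin (9 ^ d) × Fin B) := SimpleGraph.Coloring.mk col hproper
  refine ⟨9 ^ d * B, ?_, ?_⟩
  · have hcard : Fintype.card (Fin (9 ^ d) × Fin B) = 9 ^ d * B := by simp
    exact hcard ▸ Col.colorable
  · rw [hB]
    push_cast
    have h45 : (45:ℝ) ^ d = 9 ^ d * 5 ^ d := by
      rw [show (45:ℝ) = 9 * 5 by norm_num, mul_pow]
    rw [h45]
    exact le_of_eq (by ring)
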